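/- Fix φ > 0 and reals n_A ≥ 0, n_B ≥ 0. For w ∈ ℝ define a = n_A²/4 + n_A·n_B/2 + n_A·φ + n_A·w and b = n_B²/4 + n_B·φ − n_B·w + φ² + w². Then a + b > 0, and h(w) := (n_A + n_B)/2 − φ + √(a + b) is the unique real v satisfying both 2φ + v + w > 0 and 2φ + v − w > 0 and the stationarity equation 1 − (φ + n_B)/(2φ + v + w) − (φ + n_A)/(2φ + v − w) = 0. -/

import Mathlib

set_option maxHeartbeats 1000000 in
/-- With `a = n_A²/4 + n_A n_B/2 + n_A φ + n_A w` and
`b = n_B²/4 + n_B φ − n_B w + φ² + w²`, we have `a + b > 0`, and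
`h(w) = (n_A + n_B)/2 − φ + √(a + b)` is the unique real `v` satisfying
`2φ + v + w > 0`, `2φ + v − w > 0`, and the stationarity equation
`1 − (φ + n_B)/(2φ + v + w) − (φ + n_A)/(2φ + v − w) = 0`. -/
theorem stationarity_unique_solution (φ nA nB : ℝ) (hφ : 0 < φ)
    (hA : 0 ≤ nA) (hB : 0 ≤ nB) (w : ℝ) :
    0 < (nA ^ 2 / 4 + nA * nB / 2 + nA * φ + nA * w)
        + (nB ^ 2 / 4 + nB * φ - nB * w + φ ^ 2 + w ^ 2) ∧
      ∀ v : ℝ,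
        (0 < 2 * φ + v + w ∧ 0 < 2 * φ + v - w ∧
            1 - (φ + nB) / (2 * φ + v + w) - (φ + nA) / (2 * φ + v - w) = 0)
          ↔ v = (nA + nB) / 2 - φ +
              Real.sqrt ((nA ^ 2 / 4 + nA * nB / 2 + nA * φ + nA * w)
                + (nB ^ 2 / 4 + nB * φ - nB * w + φ ^ 2 + w ^ 2)) := by
  have hAφ : 0 < φ + nA := by linarith
  have hBφ : 0 < φ + nB := by linarith
  have hD : 0 < (nA ^ 2 / 4 + nA * nB / 2 + nA * φ + nA * w)
        + (nB ^ 2 / 4 + nB * φ - nB * w + φ ^ 2 + w ^ 2) := by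
    nlinarith [sq_nonneg (w + (nA - nB)/2), mul_pos hAφ hBφ]
  refine ⟨hD, ?_⟩
  set r := Real.sqrt ((nA ^ 2 / 4 + nA * nB / 2 + nA * φ + nA * w)
                + (nB ^ 2 / 4 + nB * φ - nB * w + φ ^ 2 + w ^ 2)) with hrdef
  have hr0 : 0 ≤ r := Real.sqrt_nonneg _
  have hr2 : r ^ 2 = (nA ^ 2 / 4 + nA * nB / 2 + nA * φ + nA * w)
                + (nB ^ 2 / 4 + nB * φ - nB * w + φ ^ 2 + w ^ 2) := Real.sq_sqrt hD.le
  have hp0 : 0 < φ + (nA + nB) / 2 + w + r := by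
    rcases le_or_gt 0 (φ + (nA + nB) / 2 + w) with h | h
    · nlinarith [mul_pos hBφ hAφ]
    · nlinarith [hr2, mul_pos hBφ (show (0:ℝ) < -w by nlinarith),
        mul_nonneg hr0 (show (0:ℝ) ≤ -(φ + (nA + nB) / 2 + w) by linarith)]
  have hq0 : 0 < φ + (nA + nB) / 2 - w + r := by
    rcases le_or_gt 0 (φ + (nA + nB) / 2 - w) with h | h
    · nlinarith [mul_pos hBφ hAφ]
    · nlinarith [hr2, mul_pos hAφ (show (0:ℝ) < w by nlinarith),
        mul_nonneg hr0 (show (0:ℝ) ≤ -(φ + (nA + nB) / 2 - w) by linarith)]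
  intro v
  constructor
  · rintro ⟨hp, hq, he⟩
    have he2 : (2*φ+v+w)*(2*φ+v-w) - (φ+nB)*(2*φ+v-w) - (φ+nA)*(2*φ+v+w) = 0 := by
      rw [sub_sub, sub_eq_zero, div_add_div _ _ hp.ne' hq.ne',
        eq_div_iff (mul_ne_zero hp.ne' hq.ne'), one_mul] at he
      linarith
    have key : (v - ((nA + nB) / 2 - φ + r)) * (v - ((nA + nB) / 2 - φ - r)) = 0 := by
      linear_combination he2 - hr2
    rcases mul_eq_zero.mp key with h | h
    · linarith [sub_eq_zero.mp h]
    · exfalso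
      have hv1 : v = (nA + nB) / 2 - φ - r := sub_eq_zero.mp h
      rw [hv1] at hp hq
      have hid : ((2*φ+((nA + nB) / 2 - φ - r)+w) * (2*φ+((nA + nB) / 2 - φ - r)-w))
          * ((φ + (nA + nB) / 2 + w + r) * (φ + (nA + nB) / 2 - w + r))
          = -4 * w^2 * ((φ+nA)*(φ+nB)) := by
        linear_combination (r^2 + ((nA ^ 2 / 4 + nA * nB / 2 + nA * φ + nA * w)
                + (nB ^ 2 / 4 + nB * φ - nB * w + φ ^ 2 + w ^ 2))
            - 2*w^2 - 2*(φ + (nA + nB) / 2)^2) * hr2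
      nlinarith [mul_pos (mul_pos hp hq) (mul_pos hp0 hq0), mul_pos hAφ hBφ, sq_nonneg w,
        mul_nonneg (mul_pos hAφ hBφ).le (sq_nonneg w)]
  · intro hv
    subst hv
    refine ⟨by linarith, by linarith, ?_⟩
    have hpne : (2 * φ + ((nA + nB) / 2 - φ + r) + w) ≠ 0 := by linarith
    have hqne : (2 * φ + ((nA + nB) / 2 - φ + r) - w) ≠ 0 := by linarith
    have hkey : (2*φ+((nA + nB) / 2 - φ + r)+w)*(2*φ+((nA + nB) / 2 - φ + r)-w)
        - (φ+nB)*(2*φ+((nA + nB) / 2 - φ + r)-w)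
        - (φ+nA)*(2*φ+((nA + nB) / 2 - φ + r)+w) = 0 := by
      linear_combination hr2
    rw [sub_sub, sub_eq_zero, div_add_div _ _ hpne hqne,
      eq_div_iff (mul_ne_zero hpne hqne), one_mul]
    linear_combination -hkey + 2*hr2
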